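/- arXiv:2407.03088 — 2 statements merged into one kernel-verified Lean document; each statement's English description precedes it below -/
import Mathlib

section
/- Let P be an n×n correlation with strictly positive entries and let 0 ≤ λ < 1. If there exist a dimension d and a state σ generating P with local dimension d under depolarizing noise of strength λ, then for every permutation φ of {1,…,n}: λ ≤ 1 − ∑_{x=1}^n √( max{ 0, (∑_{b=1}^n P(x,b))·(∑_{a=1}^n P(a,φ(x))) − P(x,φ(x)) } ). -/
open Matrix BigOperators Finset
open scoped Kronecker ComplexOrder

noncomputable section

/-- The effect of the depolarizing channel on a measurement effect (Heisenberg picture). -/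
def noisyEffect {d : ℕ} (lam : ℝ) (E : Matrix (Fin d) (Fin d) ℂ) : Matrix (Fin d) (Fin d) ℂ :=
  ((1 - lam : ℝ) : ℂ) • E + ((lam : ℂ) * E.trace / (d : ℂ)) • (1 : Matrix (Fin d) (Fin d) ℂ)

/-- A POVM on ℂ^d with n outcomes. -/
def IsPOVM {d n : ℕ} (E : Fin n → Matrix (Fin d) (Fin d) ℂ) : Prop :=
  (∀ x, (E x).PosSemidef) ∧ ∑ x, E x = 1

/-- P is generated with local dimension d under depolarizing noise of strength lam. -/
def GeneratesWithNoise {n : ℕ} (P : Matrix (Fin n) (Fin n) ℝ) (lam : ℝ) (d : ℕ) : Prop :=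
  ∃ (σ : Matrix (Fin d × Fin d) (Fin d × Fin d) ℂ)
    (E F : Fin n → Matrix (Fin d) (Fin d) ℂ),
    σ.PosSemidef ∧ σ.trace = 1 ∧ IsPOVM E ∧ IsPOVM F ∧
    ∀ x y, (P x y : ℂ) =
      ((noisyEffect lam (E x) ⊗ₖ noisyEffect lam (F y)) * σ).trace

/-- The matrix P̂_λ^{s,t}. -/
def Phat {n : ℕ} (P : Matrix (Fin n) (Fin n) ℝ) (lam : ℝ) (s t : Fin n → ℝ)
    (x y : Fin n) : ℝ :=
  P x y - lam * s x * (∑ a, P a y) - lam * t y * (∑ b, P x b) + lam ^ 2 * s x * t y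

/-- Nonnegative rank. -/
def NonnegRank {m n : ℕ} (P : Matrix (Fin m) (Fin n) ℝ) : ℕ :=
  sInf {r : ℕ | ∃ (u : Fin r → Fin m → ℝ) (v : Fin r → Fin n → ℝ),
    (∀ i x, 0 ≤ u i x) ∧ (∀ i y, 0 ≤ v i y) ∧ ∀ x y, P x y = ∑ i, u i x * v i y}

/-- PSD rank. -/
def PsdRank {m n : ℕ} (M : Matrix (Fin m) (Fin n) ℝ) : ℕ :=
  sInf {r : ℕ | ∃ (C : Fin m → Matrix (Fin r) (Fin r) ℂ)
    (D : Fin n → Matrix (Fin r) (Fin r) ℂ),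
    (∀ x, (C x).PosSemidef) ∧ (∀ y, (D y).PosSemidef) ∧
    ∀ x y, (M x y : ℂ) = (C x * D y).trace}

def outerProj {α : Type*} [Fintype α] (ψ : α → ℂ) : Matrix α α ℂ :=
  Matrix.of fun i j => ψ i * (starRingEnd ℂ) (ψ j)

def qval (k : ℝ) : ℝ := 1 / (1 - k) - Real.sqrt (1 / (1 - k) ^ 2 - 1)

def Bmat (m : ℕ) (k : ℝ) : Matrix (Fin m) (Fin m) ℝ :=
  Matrix.of fun x y =>
    (1 / (m : ℝ) ^ 2) * (1 - k * Real.cos (2 * Real.pi * ((x.val : ℝ) + (y.val : ℝ)) / m))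

def Amat (m : ℕ) (k : ℝ) : Matrix (Fin (m + 1)) (Fin (m + 1)) ℝ :=
  Matrix.of fun x y =>
    if x.val = 0 then
      (if y.val = 0 then (1 - qval k) ^ 2 / 2 else qval k * (1 - qval k) / (2 * m))
    else if y.val = 0 then qval k * (1 - qval k) / (2 * m)
    else ((1 + (qval k) ^ 2) / 2) *
      ((1 / (m : ℝ) ^ 2) *
        (1 - k * Real.cos (2 * Real.pi * (((x.val : ℝ) - 1) + ((y.val : ℝ) - 1)) / m)))

def IsElPsdFactorization {n : ℕ} (P : Matrix (Fin n) (Fin n) ℝ) (lam : ℝ) (r : ℕ)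
    (C D : Fin n → Matrix (Fin r) (Fin r) ℂ) : Prop :=
  (∀ x, (C x).PosSemidef) ∧ (∀ y, (D y).PosSemidef) ∧
  (∀ x y, (P x y : ℂ) = (C x * D y).trace) ∧
  IsUnit (∑ k, C k) ∧ IsUnit (∑ k, D k) ∧
  (∀ x, (C x - (((lam : ℂ) / r) * (C x * (∑ k, C k)⁻¹).trace) • (∑ k, C k)).PosSemidef) ∧
  (∀ y, (D y - (((lam : ℂ) / r) * (D y * (∑ k, D k)⁻¹).trace) • (∑ k, D k)).PosSemidef)

section AuxLemmas

lemma trace_conjTranspose_mul_self_nonneg' {m : Type*} [Fintype m] (M : Matrix m m ℂ) :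
    0 ≤ (Mᴴ * M).trace := by
  rw [Matrix.trace]
  refine Finset.sum_nonneg fun j _ => ?_
  rw [Matrix.diag_apply, Matrix.mul_apply]
  refine Finset.sum_nonneg fun i _ => ?_
  simpa [Matrix.conjTranspose_apply] using star_mul_self_nonneg (M i j)

lemma trace_mul_nonneg' {m : Type*} [Fintype m] [DecidableEq m] {A B : Matrix m m ℂ}
    (hA : A.PosSemidef) (hB : B.PosSemidef) : 0 ≤ (A * B).trace := by
  obtain ⟨C, rfl⟩ : ∃ C : Matrix m m ℂ, A = Cᴴ * C := by
    open scoped MatrixOrder in exact CStarAlgebra.nonneg_iff_eq_star_mul_self.mp hA.nonneg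
  obtain ⟨D, rfl⟩ : ∃ D : Matrix m m ℂ, B = Dᴴ * D := by
    open scoped MatrixOrder in exact CStarAlgebra.nonneg_iff_eq_star_mul_self.mp hB.nonneg
  have h : (Cᴴ * C * (Dᴴ * D)).trace = ((D * Cᴴ)ᴴ * (D * Cᴴ)).trace := by
    rw [Matrix.conjTranspose_mul, Matrix.conjTranspose_conjTranspose,
      Matrix.mul_assoc Cᴴ C (Dᴴ * D), Matrix.trace_mul_comm Cᴴ]
    simp only [Matrix.mul_assoc]
  rw [h]
  exact trace_conjTranspose_mul_self_nonneg' _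

lemma kron_conjTranspose' {p q : Type*} (A : Matrix p p ℂ) (B : Matrix q q ℂ) :
    (A ⊗ₖ B)ᴴ = Aᴴ ⊗ₖ Bᴴ := by
  ext ⟨i, j⟩ ⟨k, l⟩
  simp only [Matrix.conjTranspose_apply, Matrix.kroneckerMap_apply, star_mul', mul_comm]

lemma posSemidef_kron' {p q : Type*} [Fintype p] [Fintype q] [DecidableEq p] [DecidableEq q]
    {A : Matrix p p ℂ} {B : Matrix q q ℂ}
    (hA : A.PosSemidef) (hB : B.PosSemidef) : (A ⊗ₖ B).PosSemidef := by
  obtain ⟨C, rfl⟩ : ∃ C : Matrix p p ℂ, A = Cᴴ * C := by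
    open scoped MatrixOrder in exact CStarAlgebra.nonneg_iff_eq_star_mul_self.mp hA.nonneg
  obtain ⟨D, rfl⟩ : ∃ D : Matrix q q ℂ, B = Dᴴ * D := by
    open scoped MatrixOrder in exact CStarAlgebra.nonneg_iff_eq_star_mul_self.mp hB.nonneg
  rw [Matrix.mul_kronecker_mul, ← kron_conjTranspose']
  exact Matrix.posSemidef_conjTranspose_mul_self _

lemma sum_kronecker_left' {ι p q : Type*} (s : Finset ι)
    (E : ι → Matrix p p ℂ) (B : Matrix q q ℂ) :
    ∑ x ∈ s, (E x) ⊗ₖ B = (∑ x ∈ s, E x) ⊗ₖ B := by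
  ext ⟨i, j⟩ ⟨k, l⟩
  simp [Matrix.kroneckerMap_apply, Matrix.sum_apply, Finset.sum_mul]

lemma sum_kronecker_right' {ι p q : Type*} (s : Finset ι)
    (A : Matrix p p ℂ) (F : ι → Matrix q q ℂ) :
    ∑ y ∈ s, A ⊗ₖ (F y) = A ⊗ₖ (∑ y ∈ s, F y) := by
  ext ⟨i, j⟩ ⟨k, l⟩
  simp [Matrix.kroneckerMap_apply, Matrix.sum_apply, Finset.mul_sum]

end AuxLemmas

/-- a necessary condition on the noise strength λ for a correlation P
with strictly positive entries to be generated quantumly under depolarizing noise. -/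
theorem noise_strength_upper_bound_of_reachable
    {n : ℕ} (P : Matrix (Fin n) (Fin n) ℝ)
    (hpos : ∀ x y, 0 < P x y) (hsum : ∑ x, ∑ y, P x y = 1)
    (lam : ℝ) (hlam0 : 0 ≤ lam) (hlam1 : lam < 1)
    (d : ℕ) (hgen : GeneratesWithNoise P lam d) :
    ∀ φ : Equiv.Perm (Fin n),
      lam ≤ 1 - ∑ x, Real.sqrt
        (max 0 ((∑ b, P x b) * (∑ a, P a (φ x)) - P x (φ x))) := by
  obtain ⟨σ, E, F, hσ, hσtr, ⟨hEp, hEs⟩, ⟨hFp, hFs⟩, hP⟩ := hgen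
  intro φ
  -- d is nonzero
  have hd0 : d ≠ 0 := by
    rintro rfl
    rw [Matrix.trace] at hσtr
    simp at hσtr
  have hdR : (d : ℝ) ≠ 0 := Nat.cast_ne_zero.mpr hd0
  have hdC : (d : ℂ) ≠ 0 := Nat.cast_ne_zero.mpr hd0
  -- generic facts about nonnegative complex numbers
  have crealre : ∀ z : ℂ, 0 ≤ z → 0 ≤ z.re := fun z hz => by
    simpa using (Complex.le_def.mp hz).1
  have creal : ∀ z : ℂ, 0 ≤ z → z = ((z.re : ℝ) : ℂ) := by
    intro z hz
    have h := (Complex.le_def.mp hz).2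
    apply Complex.ext
    · simp
    · simpa using h.symm
  -- the real quantities
  obtain ⟨tEF, htEF⟩ : ∃ t : Fin n → Fin n → ℝ,
      ∀ x y, 0 ≤ t x y ∧ ((E x ⊗ₖ F y) * σ).trace = ((t x y : ℝ) : ℂ) := by
    refine ⟨fun x y => ((E x ⊗ₖ F y) * σ).trace.re, fun x y => ?_⟩
    have h0 : 0 ≤ ((E x ⊗ₖ F y) * σ).trace :=
      trace_mul_nonneg' (posSemidef_kron' (hEp x) (hFp y)) hσ
    exact ⟨crealre _ h0, creal _ h0⟩
  obtain ⟨tE, htE⟩ : ∃ t : Fin n → ℝ,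
      ∀ x, 0 ≤ t x ∧
        ((E x ⊗ₖ (1 : Matrix (Fin d) (Fin d) ℂ)) * σ).trace = ((t x : ℝ) : ℂ) := by
    refine ⟨fun x => ((E x ⊗ₖ (1 : Matrix (Fin d) (Fin d) ℂ)) * σ).trace.re, fun x => ?_⟩
    have h0 : 0 ≤ ((E x ⊗ₖ (1 : Matrix (Fin d) (Fin d) ℂ)) * σ).trace :=
      trace_mul_nonneg' (posSemidef_kron' (hEp x) Matrix.PosSemidef.one) hσ
    exact ⟨crealre _ h0, creal _ h0⟩
  obtain ⟨tF, htF⟩ : ∃ t : Fin n → ℝ,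
      ∀ y, 0 ≤ t y ∧
        (((1 : Matrix (Fin d) (Fin d) ℂ) ⊗ₖ F y) * σ).trace = ((t y : ℝ) : ℂ) := by
    refine ⟨fun y => (((1 : Matrix (Fin d) (Fin d) ℂ) ⊗ₖ F y) * σ).trace.re, fun y => ?_⟩
    have h0 : 0 ≤ (((1 : Matrix (Fin d) (Fin d) ℂ) ⊗ₖ F y) * σ).trace :=
      trace_mul_nonneg' (posSemidef_kron' Matrix.PosSemidef.one (hFp y)) hσ
    exact ⟨crealre _ h0, creal _ h0⟩
  obtain ⟨ee, hee⟩ : ∃ e : Fin n → ℝ,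
      ∀ x, 0 ≤ e x ∧ (E x).trace = (((d : ℝ) * e x : ℝ) : ℂ) := by
    refine ⟨fun x => (E x).trace.re / d, fun x => ?_⟩
    have h0 : 0 ≤ (E x).trace := by
      have := trace_mul_nonneg' (hEp x) (Matrix.PosSemidef.one (n := Fin d))
      simpa [Matrix.mul_one] using this
    refine ⟨div_nonneg (crealre _ h0) (Nat.cast_nonneg d), ?_⟩
    rw [mul_div_cancel₀ _ hdR]
    exact creal _ h0
  obtain ⟨ff, hff⟩ : ∃ f : Fin n → ℝ,
      ∀ y, 0 ≤ f y ∧ (F y).trace = (((d : ℝ) * f y : ℝ) : ℂ) := by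
    refine ⟨fun y => (F y).trace.re / d, fun y => ?_⟩
    have h0 : 0 ≤ (F y).trace := by
      have := trace_mul_nonneg' (hFp y) (Matrix.PosSemidef.one (n := Fin d))
      simpa [Matrix.mul_one] using this
    refine ⟨div_nonneg (crealre _ h0) (Nat.cast_nonneg d), ?_⟩
    rw [mul_div_cancel₀ _ hdR]
    exact creal _ h0
  -- the key expansion of P in terms of these quantities
  have hPr : ∀ x y, P x y =
      (1 - lam) ^ 2 * tEF x y + (1 - lam) * (lam * ff y) * tE x
        + (1 - lam) * (lam * ee x) * tF y + (lam * ee x) * (lam * ff y) := by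
    intro x y
    have hc : (P x y : ℂ) =
        (((1 - lam) ^ 2 * tEF x y + (1 - lam) * (lam * ff y) * tE x
          + (1 - lam) * (lam * ee x) * tF y + (lam * ee x) * (lam * ff y) : ℝ) : ℂ) := by
      rw [hP x y, noisyEffect, noisyEffect]
      simp only [Matrix.add_kronecker, Matrix.kronecker_add, Matrix.smul_kronecker,
        Matrix.kronecker_smul, Matrix.add_mul, Matrix.smul_mul, Matrix.trace_add,
        Matrix.trace_smul, smul_eq_mul, Matrix.one_kronecker_one, Matrix.one_mul, hσtr]
      rw [(htEF x y).2, (htE x).2, (htF y).2, (hee x).2, (hff y).2]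
      push_cast
      field_simp
      ring
    exact_mod_cast hc
  -- sum identities
  have hrowEF : ∀ x, ∑ y, tEF x y = tE x := by
    intro x
    have hc : ∑ y, ((tEF x y : ℝ) : ℂ) = ((tE x : ℝ) : ℂ) := by
      calc ∑ y, ((tEF x y : ℝ) : ℂ) = ∑ y, ((E x ⊗ₖ F y) * σ).trace :=
            Finset.sum_congr rfl fun y _ => ((htEF x y).2).symm
        _ = ((E x ⊗ₖ (1 : Matrix (Fin d) (Fin d) ℂ)) * σ).trace := by
            rw [← Matrix.trace_sum, ← Finset.sum_mul, sum_kronecker_right', hFs]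
        _ = ((tE x : ℝ) : ℂ) := (htE x).2
    exact_mod_cast hc
  have hcolEF : ∀ y, ∑ x, tEF x y = tF y := by
    intro y
    have hc : ∑ x, ((tEF x y : ℝ) : ℂ) = ((tF y : ℝ) : ℂ) := by
      calc ∑ x, ((tEF x y : ℝ) : ℂ) = ∑ x, ((E x ⊗ₖ F y) * σ).trace :=
            Finset.sum_congr rfl fun x _ => ((htEF x y).2).symm
        _ = (((1 : Matrix (Fin d) (Fin d) ℂ) ⊗ₖ F y) * σ).trace := by
            rw [← Matrix.trace_sum, ← Finset.sum_mul, sum_kronecker_left', hEs]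
        _ = ((tF y : ℝ) : ℂ) := (htF y).2
    exact_mod_cast hc
  have hsE : ∑ x, tE x = 1 := by
    have hc : ∑ x, ((tE x : ℝ) : ℂ) = 1 := by
      calc ∑ x, ((tE x : ℝ) : ℂ)
          = ∑ x, ((E x ⊗ₖ (1 : Matrix (Fin d) (Fin d) ℂ)) * σ).trace :=
            Finset.sum_congr rfl fun x _ => ((htE x).2).symm
        _ = 1 := by
            rw [← Matrix.trace_sum, ← Finset.sum_mul, sum_kronecker_left', hEs,
              Matrix.one_kronecker_one, Matrix.one_mul, hσtr]
    exact_mod_cast hc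
  have hsF : ∑ y, tF y = 1 := by
    have hc : ∑ y, ((tF y : ℝ) : ℂ) = 1 := by
      calc ∑ y, ((tF y : ℝ) : ℂ)
          = ∑ y, (((1 : Matrix (Fin d) (Fin d) ℂ) ⊗ₖ F y) * σ).trace :=
            Finset.sum_congr rfl fun y _ => ((htF y).2).symm
        _ = 1 := by
            rw [← Matrix.trace_sum, ← Finset.sum_mul, sum_kronecker_right', hFs,
              Matrix.one_kronecker_one, Matrix.one_mul, hσtr]
    exact_mod_cast hc
  have hse : ∑ x, ee x = 1 := by
    have hc : ∑ x, (((d : ℝ) * ee x : ℝ) : ℂ) = ((d : ℝ) : ℂ) := by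
      calc ∑ x, (((d : ℝ) * ee x : ℝ) : ℂ) = ∑ x, (E x).trace :=
            Finset.sum_congr rfl fun x _ => ((hee x).2).symm
        _ = (1 : Matrix (Fin d) (Fin d) ℂ).trace := by rw [← Matrix.trace_sum, hEs]
        _ = ((d : ℝ) : ℂ) := by rw [Matrix.trace_one]; push_cast; simp
    have hr : ∑ x, (d : ℝ) * ee x = (d : ℝ) := by exact_mod_cast hc
    rw [← Finset.mul_sum] at hr
    have := mul_left_cancel₀ hdR (hr.trans (mul_one (d : ℝ)).symm)
    exact this
  have hsf : ∑ y, ff y = 1 := by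
    have hc : ∑ y, (((d : ℝ) * ff y : ℝ) : ℂ) = ((d : ℝ) : ℂ) := by
      calc ∑ y, (((d : ℝ) * ff y : ℝ) : ℂ) = ∑ y, (F y).trace :=
            Finset.sum_congr rfl fun y _ => ((hff y).2).symm
        _ = (1 : Matrix (Fin d) (Fin d) ℂ).trace := by rw [← Matrix.trace_sum, hFs]
        _ = ((d : ℝ) : ℂ) := by rw [Matrix.trace_one]; push_cast; simp
    have hr : ∑ y, (d : ℝ) * ff y = (d : ℝ) := by exact_mod_cast hc
    rw [← Finset.mul_sum] at hr
    exact mul_left_cancel₀ hdR (hr.trans (mul_one (d : ℝ)).symm)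
  -- row and column sums of P
  have hrow : ∀ x, ∑ y, P x y = (1 - lam) * tE x + lam * ee x := by
    intro x
    calc ∑ y, P x y
        = ∑ y, ((1 - lam) ^ 2 * tEF x y + ((1 - lam) * lam * tE x) * ff y
            + ((1 - lam) * lam * ee x) * tF y + (lam ^ 2 * ee x) * ff y) :=
          Finset.sum_congr rfl fun y _ => by rw [hPr x y]; ring
      _ = (1 - lam) ^ 2 * (∑ y, tEF x y) + ((1 - lam) * lam * tE x) * (∑ y, ff y)
            + ((1 - lam) * lam * ee x) * (∑ y, tF y) + (lam ^ 2 * ee x) * (∑ y, ff y) := by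
          simp only [Finset.sum_add_distrib, Finset.mul_sum]
      _ = (1 - lam) * tE x + lam * ee x := by
          rw [hrowEF x, hsf, hsF]; ring
  have hcol : ∀ y, ∑ x, P x y = (1 - lam) * tF y + lam * ff y := by
    intro y
    calc ∑ x, P x y
        = ∑ x, ((1 - lam) ^ 2 * tEF x y + ((1 - lam) * lam * ff y) * tE x
            + ((1 - lam) * lam * tF y) * ee x + (lam ^ 2 * ff y) * ee x) :=
          Finset.sum_congr rfl fun x _ => by rw [hPr x y]; ring
      _ = (1 - lam) ^ 2 * (∑ x, tEF x y) + ((1 - lam) * lam * ff y) * (∑ x, tE x)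
            + ((1 - lam) * lam * tF y) * (∑ x, ee x) + (lam ^ 2 * ff y) * (∑ x, ee x) := by
          simp only [Finset.sum_add_distrib, Finset.mul_sum]
      _ = (1 - lam) * tF y + lam * ff y := by
          rw [hcolEF y, hsE, hse]; ring
  -- pointwise bound
  have key : ∀ x, Real.sqrt (max 0 ((∑ b, P x b) * (∑ a, P a (φ x)) - P x (φ x)))
      ≤ (1 - lam) * ((tE x + tF (φ x)) / 2) := by
    intro x
    have htEF0 := (htEF x (φ x)).1
    have htE0 := (htE x).1
    have htF0 := (htF (φ x)).1
    have h1 : (∑ b, P x b) * (∑ a, P a (φ x)) - P x (φ x)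
        ≤ (1 - lam) ^ 2 * (tE x * tF (φ x)) := by
      rw [hrow x, hcol (φ x), hPr x (φ x)]
      nlinarith [mul_nonneg (sq_nonneg (1 - lam)) htEF0]
    have h2 : max 0 ((∑ b, P x b) * (∑ a, P a (φ x)) - P x (φ x))
        ≤ ((1 - lam) * ((tE x + tF (φ x)) / 2)) ^ 2 := by
      refine max_le (sq_nonneg _) ?_
      refine h1.trans ?_
      nlinarith [mul_nonneg (sq_nonneg (1 - lam)) (sq_nonneg (tE x - tF (φ x)))]
    calc Real.sqrt (max 0 ((∑ b, P x b) * (∑ a, P a (φ x)) - P x (φ x)))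
        ≤ Real.sqrt (((1 - lam) * ((tE x + tF (φ x)) / 2)) ^ 2) := Real.sqrt_le_sqrt h2
      _ = (1 - lam) * ((tE x + tF (φ x)) / 2) := by
          rw [Real.sqrt_sq (mul_nonneg (by linarith) (by linarith))]
  -- summation
  have hperm : ∑ x, tF (φ x) = ∑ y, tF y := Equiv.sum_comp φ tF
  have hsum2 : ∑ x, (1 - lam) * ((tE x + tF (φ x)) / 2) = 1 - lam := by
    rw [← Finset.mul_sum]
    have h3 : ∑ x, (tE x + tF (φ x)) / 2 = 1 := by
      rw [← Finset.sum_div, Finset.sum_add_distrib, hsE, hperm, hsF]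
      norm_num
    rw [h3, mul_one]
  have hfinal : ∑ x, Real.sqrt (max 0 ((∑ b, P x b) * (∑ a, P a (φ x)) - P x (φ x)))
      ≤ 1 - lam := hsum2 ▸ Finset.sum_le_sum (fun x _ => key x)
  linarith

end
end

section
/- Fix k ∈ (0,1), an integer m ≥ 1, let q = 1/(1−k) − √(1/(1−k)² − 1) ∈ (0,1), let A_m be the (m+1)×(m+1) correlation defined from B_m, and let 0 < ε < q. Then every local dimension d for which A_m can be generated with local dimension d under depolarizing noise of strength λ = q − ε satisfies d ≥ (1/(1−q+ε))·( ((1−q)/2)·√(2q²/(ε(1+q))) − q + ε ). In particular C_{q−ε}(A_m) = Ω(ε^{−1/2}). -/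
set_option maxHeartbeats 1000000


open Matrix BigOperators Finset
open scoped Kronecker ComplexOrder

noncomputable section

section AuxMatrix
set_option linter.unusedSectionVars false

variable {n m : Type*} [Fintype n] [Fintype m] [DecidableEq n] [DecidableEq m]



lemma psd_diag_nonneg {A : Matrix n n ℂ} (hA : A.PosSemidef) (i : n) : 0 ≤ A i i := by
  exact hA.diag_nonneg

lemma psd_trace_nonneg {A : Matrix n n ℂ} (hA : A.PosSemidef) : 0 ≤ A.trace :=
  Finset.sum_nonneg fun i _ => psd_diag_nonneg hA i

lemma psd_exists_conjT_mul_self {A : Matrix n n ℂ} (hA : A.PosSemidef) :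
    ∃ C : Matrix n n ℂ, A = Cᴴ * C := by
  open scoped MatrixOrder in
  obtain ⟨C, hC⟩ := CStarAlgebra.nonneg_iff_eq_star_mul_self.mp hA.nonneg
  exact ⟨C, hC⟩

lemma trace_mul_psd_nonneg {A B : Matrix n n ℂ} (hA : A.PosSemidef) (hB : B.PosSemidef) :
    0 ≤ (A * B).trace := by
  obtain ⟨C, rfl⟩ := psd_exists_conjT_mul_self hB
  rw [← Matrix.mul_assoc, Matrix.trace_mul_cycle]
  exact psd_trace_nonneg (hA.mul_mul_conjTranspose_same C)

lemma conjT_kron (A : Matrix n n ℂ) (B : Matrix m m ℂ) :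
    (A ⊗ₖ B)ᴴ = Aᴴ ⊗ₖ Bᴴ := by
  ext ⟨i, j⟩ ⟨k, l⟩
  simp [Matrix.conjTranspose_apply, Matrix.kroneckerMap_apply, mul_comm]

lemma psd_kron {A : Matrix n n ℂ} {B : Matrix m m ℂ}
    (hA : A.PosSemidef) (hB : B.PosSemidef) : (A ⊗ₖ B).PosSemidef := by
  obtain ⟨C, rfl⟩ := psd_exists_conjT_mul_self hA
  obtain ⟨D, rfl⟩ := psd_exists_conjT_mul_self hB
  have : (Cᴴ * C) ⊗ₖ (Dᴴ * D) = (C ⊗ₖ D)ᴴ * (C ⊗ₖ D) := by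
    rw [conjT_kron, Matrix.mul_kronecker_mul]
  rw [this]
  exact Matrix.posSemidef_conjTranspose_mul_self _

lemma psd_le_trace_smul_one {A : Matrix n n ℂ} (hA : A.PosSemidef) :
    (A.trace • (1 : Matrix n n ℂ) - A).PosSemidef := by
  have hH := hA.1
  set U : Matrix n n ℂ := (hH.eigenvectorUnitary : Matrix n n ℂ) with hU
  have hUU : star U * U = 1 := (Matrix.mem_unitaryGroup_iff').mp hH.eigenvectorUnitary.2
  have hUU' : U * star U = 1 := (Matrix.mem_unitaryGroup_iff).mp hH.eigenvectorUnitary.2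
  have hspec : A = U * diagonal (RCLike.ofReal ∘ hH.eigenvalues) * star U := hH.spectral_theorem
  have htr : A.trace = ∑ i, (hH.eigenvalues i : ℂ) := by
    conv_lhs => rw [hspec]
    rw [Matrix.trace_mul_cycle, hUU, Matrix.one_mul, Matrix.trace_diagonal]
    simp
  have hkey : A.trace • (1 : Matrix n n ℂ) - A
      = U * diagonal (fun i => A.trace - (hH.eigenvalues i : ℂ)) * star U := by
    have h1 : A.trace • (1 : Matrix n n ℂ) = U * (A.trace • (1 : Matrix n n ℂ)) * star U := by
      rw [Matrix.mul_smul, Matrix.smul_mul, Matrix.mul_one, hUU']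
    have h2 : diagonal (fun i => A.trace - (hH.eigenvalues i : ℂ))
        = A.trace • (1 : Matrix n n ℂ) - diagonal (RCLike.ofReal ∘ hH.eigenvalues) := by
      rw [Matrix.smul_one_eq_diagonal, Matrix.diagonal_sub]
      rfl
    rw [h2, Matrix.mul_sub, Matrix.sub_mul, ← hspec, ← h1]
  have hnn : ∀ i, 0 ≤ A.trace - (hH.eigenvalues i : ℂ) := by
    intro i
    rw [htr, ← Finset.sum_erase_add _ _ (Finset.mem_univ i)]
    simp only [add_sub_cancel_right]
    refine Finset.sum_nonneg fun j _ => ?_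
    rw [Complex.zero_le_real]
    exact hA.eigenvalues_nonneg j
  have hD : (diagonal (fun i => A.trace - (hH.eigenvalues i : ℂ))).PosSemidef :=
    Matrix.posSemidef_diagonal_iff.mpr hnn
  have := hD.mul_mul_conjTranspose_same U
  rw [hkey]
  simpa [Matrix.star_eq_conjTranspose] using this

lemma sub_kron (A B : Matrix n n ℂ) (C : Matrix m m ℂ) :
    (A - B) ⊗ₖ C = A ⊗ₖ C - B ⊗ₖ C := by
  ext ⟨i, j⟩ ⟨a, b⟩
  simp [Matrix.kroneckerMap_apply, sub_mul]

lemma kron_sub (A : Matrix n n ℂ) (B C : Matrix m m ℂ) :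
    A ⊗ₖ (B - C) = A ⊗ₖ B - A ⊗ₖ C := by
  ext ⟨i, j⟩ ⟨a, b⟩
  simp [Matrix.kroneckerMap_apply, mul_sub]

lemma kron_sum_right {ι : Type*} [Fintype ι]
    (A : Matrix n n ℂ) (G : ι → Matrix m m ℂ) :
    A ⊗ₖ (∑ y, G y) = ∑ y, A ⊗ₖ G y := by
  ext ⟨i, j⟩ ⟨a, b⟩
  simp [Matrix.kroneckerMap_apply, Matrix.sum_apply, Finset.mul_sum]

lemma kron_sum_left {ι : Type*} [Fintype ι]
    (G : ι → Matrix n n ℂ) (B : Matrix m m ℂ) :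
    (∑ x, G x) ⊗ₖ B = ∑ x, G x ⊗ₖ B := by
  ext ⟨i, j⟩ ⟨a, b⟩
  simp [Matrix.kroneckerMap_apply, Matrix.sum_apply, Finset.sum_mul]

lemma psd_sum {ι : Type*} (s : Finset ι)
    (G : ι → Matrix n n ℂ) (h : ∀ i ∈ s, (G i).PosSemidef) :
    (∑ i ∈ s, G i).PosSemidef := by
  classical
  induction s using Finset.induction_on with
  | empty => simpa using Matrix.PosSemidef.zero
  | @insert a s hnotmem ih =>
    rw [Finset.sum_insert hnotmem]
    exact (h _ (Finset.mem_insert_self _ _)).add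
      (ih fun i hi => h i (Finset.mem_insert_of_mem hi))

end AuxMatrix

lemma psd_one_sub_povm {d n : ℕ} {F : Fin (n + 1) → Matrix (Fin d) (Fin d) ℂ}
    (hpsd : ∀ y, (F y).PosSemidef) (hsum : ∑ y, F y = 1) :
    ((1 : Matrix (Fin d) (Fin d) ℂ) - F 0).PosSemidef := by
  have h : (1 : Matrix (Fin d) (Fin d) ℂ) - F 0 = ∑ y ∈ Finset.univ.erase 0, F y := by
    rw [← hsum, ← Finset.add_sum_erase _ _ (Finset.mem_univ 0), add_sub_cancel_left]
  rw [h]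
  exact psd_sum _ _ fun i _ => hpsd i

lemma qval_pos {k : ℝ} (hk0 : 0 < k) (hk1 : k < 1) : 0 < qval k := by
  unfold qval
  have hk : 0 < 1 - k := by linarith
  have hc : 1 < 1 / (1 - k) := one_lt_one_div hk (by linarith)
  have hc2 : (1 / (1 - k)) ^ 2 = 1 / (1 - k) ^ 2 := by
    rw [div_pow, one_pow]
  have h1 : 1 / (1 - k) ^ 2 - 1 < (1 / (1 - k)) ^ 2 := by
    rw [hc2]
    linarith
  have h0 : 0 ≤ 1 / (1 - k) ^ 2 - 1 := by
    rw [← hc2]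
    nlinarith [hc]
  have := Real.sqrt_lt_sqrt h0 h1
  rw [Real.sqrt_sq (by linarith)] at this
  linarith

lemma qval_lt_one {k : ℝ} (hk0 : 0 < k) (hk1 : k < 1) : qval k < 1 := by
  unfold qval
  have hk : 0 < 1 - k := by linarith
  have hc : 1 < 1 / (1 - k) := one_lt_one_div hk (by linarith)
  have hc2 : (1 / (1 - k)) ^ 2 = 1 / (1 - k) ^ 2 := by
    rw [div_pow, one_pow]
  have h1 : (1 / (1 - k) - 1) ^ 2 < 1 / (1 - k) ^ 2 - 1 := by
    rw [← hc2]
    nlinarith [hc]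
  have h0 : 0 ≤ (1 / (1 - k) - 1) ^ 2 := sq_nonneg _
  have := Real.sqrt_lt_sqrt h0 h1
  rw [Real.sqrt_sq (by linarith)] at this
  linarith


lemma scalar_core (q ε d u v aR bR qR lam L μ K R S : ℝ)
    (hlam : lam = q - ε) (hL : L = 1 - lam) (hμ : μ = (1 - q) / 2) (hK : K = L * d + lam)
    (hR : R = 2 * q ^ 2 / (ε * (1 + q))) (hS : S = μ * Real.sqrt R)
    (hq0 : 0 < q) (hq1 : q < 1) (hε0 : 0 < ε) (hεq : ε < q) (hd : 1 ≤ d)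
    (hu : 0 ≤ u) (hv : 0 ≤ v) (hqR : 0 ≤ qR)
    (e1 : μ = L * aR + u) (e2 : μ = L * bR + v)
    (e0 : 2 * μ ^ 2 = L ^ 2 * qR + L * (v * aR + u * bR) + u * v)
    (hQa : qR ≤ aR) (hQb : qR ≤ bR)
    (hau : lam * aR ≤ d * u) (hbv : lam * bR ≤ d * v) :
    S ≤ K := by
  have hL0 : 0 < L := by rw [hL, hlam]; linarith
  have hμ0 : 0 < μ := by rw [hμ]; linarith
  have hlam0 : 0 < lam := by rw [hlam]; linarith
  have hK1 : 1 ≤ K := by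
    have h := mul_le_mul_of_nonneg_left hd hL0.le
    rw [mul_one] at h
    rw [hK]; linarith [h, hL.symm.le, hL.le]
  have hR0 : 0 ≤ R := by rw [hR]; positivity
  have hS0 : 0 ≤ S := by
    rw [hS]
    exact mul_nonneg (by rw [hμ]; linarith) (Real.sqrt_nonneg _)
  by_cases hcase : S ≤ 1
  · linarith
  push_neg at hcase
  -- key identity
  have e12 : μ * μ = (L * aR + u) * (L * bR + v) := by rw [← e1, ← e2]
  have key : μ ^ 2 = L ^ 2 * (qR - aR * bR) := by linarith [e12, e0]
  have ha' : L * aR = μ - u := by linarith [e1]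
  have hb' : L * bR = μ - v := by linarith [e2]
  have hLmu : L - μ = μ + ε := by rw [hL, hμ, hlam]; ring
  have i1 : μ ^ 2 ≤ (μ - u) * (μ + ε + v) := by
    have m1 : L ^ 2 * (qR - aR * bR) ≤ L ^ 2 * (aR - aR * bR) :=
      mul_le_mul_of_nonneg_left (by linarith [hQa]) (sq_nonneg L)
    have m2 : L ^ 2 * (aR - aR * bR) = (μ - u) * (μ + ε + v) := by
      have hr : L ^ 2 * (aR - aR * bR) = (L * aR) * (L - L * bR) := by ring
      rw [hr, ha', hb', show L - (μ - v) = μ + ε + v from by linarith [hLmu]]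
    linarith [key, m1, m2]
  have i2 : μ ^ 2 ≤ (μ - v) * (μ + ε + u) := by
    have m1 : L ^ 2 * (qR - aR * bR) ≤ L ^ 2 * (bR - aR * bR) :=
      mul_le_mul_of_nonneg_left (by linarith [hQb]) (sq_nonneg L)
    have m2 : L ^ 2 * (bR - aR * bR) = (μ - v) * (μ + ε + u) := by
      have hr : L ^ 2 * (bR - aR * bR) = (L * bR) * (L - L * aR) := by ring
      rw [hr, ha', hb', show L - (μ - u) = μ + ε + u from by linarith [hLmu]]
    linarith [key, m1, m2]
  have i1' : u * μ + u * ε + u * v ≤ μ * ε + μ * v := by linarith [i1]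
  have i2' : v * μ + v * ε + u * v ≤ μ * ε + μ * u := by linarith [i2]
  have step3 : u * v ≤ μ * ε := by
    linarith [i1', i2', mul_nonneg hε0.le hu, mul_nonneg hε0.le hv]
  -- lower bounds on u, v
  have s4a : lam * μ ≤ K * u := by
    have h := mul_le_mul_of_nonneg_left hau hL0.le
    have e1' : lam * μ = lam * (L * aR) + lam * u := by rw [e1]; ring
    have hKu : K * u = L * (d * u) + lam * u := by rw [hK]; ring
    linarith [h, e1', hKu]
  have s4b : lam * μ ≤ K * v := by
    have h := mul_le_mul_of_nonneg_left hbv hL0.le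
    have e2' : lam * μ = lam * (L * bR) + lam * v := by rw [e2]; ring
    have hKv : K * v = L * (d * v) + lam * v := by rw [hK]; ring
    linarith [h, e2', hKv]
  have hlamμ : 0 ≤ lam * μ := by positivity
  have s5' : (lam * μ) * (lam * μ) ≤ (K * u) * (K * v) :=
    mul_le_mul s4a s4b hlamμ (le_trans hlamμ s4a)
  have step3K : K ^ 2 * (u * v) ≤ K ^ 2 * (μ * ε) :=
    mul_le_mul_of_nonneg_left step3 (sq_nonneg K)
  have s5 : lam ^ 2 * μ ≤ K ^ 2 * ε := by
    have h1 : (lam ^ 2 * μ) * μ ≤ (K ^ 2 * ε) * μ := by linarith [s5', step3K]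
    exact le_of_mul_le_mul_right h1 hμ0
  have hεq' : 0 < ε * (1 + q) := by positivity
  have hRmul : R * (ε * (1 + q)) = 2 * q ^ 2 := by
    rw [hR, div_mul_cancel₀ _ (ne_of_gt hεq')]
  have hSsq' : S ^ 2 * (2 * ε * (1 + q)) = q ^ 2 * (1 - q) ^ 2 := by
    have h1 : S ^ 2 = μ ^ 2 * R := by rw [hS, mul_pow, Real.sq_sqrt hR0]
    rw [h1, hμ]
    linear_combination ((1 - q) ^ 2 / 2) * hRmul
  have hS2 : 1 < S ^ 2 := by
    rw [pow_two]
    calc (1:ℝ) = 1 * 1 := by ring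
    _ < S * S := mul_lt_mul' hcase.le hcase zero_le_one (by linarith)
  have hε' : 2 * ε * (1 + q) < q ^ 2 * (1 - q) ^ 2 := by
    have h := mul_lt_mul_of_pos_right hS2 (show (0:ℝ) < 2 * ε * (1 + q) by positivity)
    rw [hSsq'] at h; linarith [h]
  have hlambig : q ^ 2 * (1 - q) ≤ lam ^ 2 * (1 + q) := by
    have hq' : q * (2 * ε * (1 + q)) ≤ q * (q ^ 2 * (1 - q) ^ 2) :=
      mul_le_mul_of_nonneg_left hε'.le hq0.le
    have hq3 : 0 ≤ q ^ 3 * ((1 - q) * (1 + q)) :=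
      mul_nonneg (pow_nonneg hq0.le 3) (mul_nonneg (by linarith) (by linarith))
    rw [hlam]
    linarith [hq', hq3, sq_nonneg ε, mul_nonneg (sq_nonneg ε) hq0.le, pow_nonneg hq0.le 4]
  have hS2K2 : S ^ 2 ≤ K ^ 2 := by
    have s5b : lam ^ 2 * (1 - q) ≤ K ^ 2 * ε * 2 := by
      rw [hμ] at s5; linarith [s5]
    have m1 : lam ^ 2 * (1 - q) * (1 + q) ≤ K ^ 2 * ε * 2 * (1 + q) :=
      mul_le_mul_of_nonneg_right s5b (by linarith)
    have m2 : q ^ 2 * (1 - q) * (1 - q) ≤ lam ^ 2 * (1 + q) * (1 - q) :=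
      mul_le_mul_of_nonneg_right hlambig (by linarith)
    have hfin : S ^ 2 * (2 * ε * (1 + q)) ≤ K ^ 2 * (2 * ε * (1 + q)) := by
      rw [hSsq']; linarith [m1, m2]
    exact le_of_mul_le_mul_right hfin (by positivity)
  calc S = Real.sqrt (S ^ 2) := (Real.sqrt_sq hS0).symm
  _ ≤ Real.sqrt (K ^ 2) := Real.sqrt_le_sqrt hS2K2
  _ = K := Real.sqrt_sq (by linarith)

lemma scalar_endgame (q ε d u v aR bR qR : ℝ)
    (hq0 : 0 < q) (hq1 : q < 1) (hε0 : 0 < ε) (hεq : ε < q) (hd : 1 ≤ d)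
    (hu : 0 ≤ u) (hv : 0 ≤ v) (hqR : 0 ≤ qR)
    (e1 : (1 - q) / 2 = (1 - (q - ε)) * aR + u)
    (e2 : (1 - q) / 2 = (1 - (q - ε)) * bR + v)
    (e0 : (1 - q) ^ 2 / 2 = (1 - (q - ε)) ^ 2 * qR + (1 - (q - ε)) * (v * aR + u * bR) + u * v)
    (hQa : qR ≤ aR) (hQb : qR ≤ bR)
    (hau : (q - ε) * aR ≤ d * u) (hbv : (q - ε) * bR ≤ d * v) :
    (1 / (1 - q + ε)) *
      (((1 - q) / 2) * Real.sqrt (2 * q ^ 2 / (ε * (1 + q))) - q + ε) ≤ d := by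
  have hSK := scalar_core q ε d u v aR bR qR (q - ε) (1 - (q - ε)) ((1 - q) / 2)
    ((1 - (q - ε)) * d + (q - ε)) (2 * q ^ 2 / (ε * (1 + q)))
    (((1 - q) / 2) * Real.sqrt (2 * q ^ 2 / (ε * (1 + q))))
    rfl rfl rfl rfl rfl rfl hq0 hq1 hε0 hεq hd hu hv hqR e1 e2
    (by linarith [e0]) hQa hQb hau hbv
  rw [div_mul_eq_mul_div, div_le_iff₀ (by linarith : (0:ℝ) < 1 - q + ε)]
  linarith [hSK]

/-- a lower bound of order ε^{−1/2} on every local dimension d of a noisy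
quantum protocol generating A_m at noise strength λ = q − ε. -/
theorem Amat_dimension_lower_bound
    (k : ℝ) (hk0 : 0 < k) (hk1 : k < 1) (m : ℕ) (hm : 1 ≤ m)
    (ε : ℝ) (hε0 : 0 < ε) (hεq : ε < qval k)
    (d : ℕ) (hgen : GeneratesWithNoise (Amat m k) (qval k - ε) d) :
    (1 / (1 - qval k + ε)) *
      (((1 - qval k) / 2) * Real.sqrt (2 * (qval k) ^ 2 / (ε * (1 + qval k)))
        - qval k + ε) ≤ (d : ℝ) := by
  have hq0 : 0 < qval k := qval_pos hk0 hk1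
  have hq1 : qval k < 1 := qval_lt_one hk0 hk1
  obtain ⟨σ, E, F, hσpsd, hσtr, ⟨hEpsd, hEsum⟩, ⟨hFpsd, hFsum⟩, hP⟩ := hgen
  rcases Nat.eq_zero_or_pos d with hd0 | hdpos
  · exfalso
    subst hd0
    rw [Matrix.trace] at hσtr
    simp at hσtr
  have hdR : (1:ℝ) ≤ (d:ℝ) := by exact_mod_cast hdpos
  have hdC : ((d:ℕ):ℂ) ≠ 0 := by exact_mod_cast hdpos.ne'
  have hdR0 : ((d:ℕ):ℝ) ≠ 0 := by exact_mod_cast hdpos.ne'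
  set lam := qval k - ε with hlam
  have hlam0 : 0 < lam := by rw [hlam]; linarith
  have hlam1 : lam < 1 := by rw [hlam]; linarith
  have hI : (1 : Matrix (Fin d) (Fin d) ℂ).PosSemidef := Matrix.PosSemidef.one
  -- complex quantities
  set A0 := (((E 0) ⊗ₖ (1 : Matrix (Fin d) (Fin d) ℂ)) * σ).trace with hA0def
  set B0 := (((1 : Matrix (Fin d) (Fin d) ℂ) ⊗ₖ (F 0)) * σ).trace with hB0def
  set Q00 := (((E 0) ⊗ₖ (F 0)) * σ).trace with hQ00def
  have hQ0 : 0 ≤ Q00 := trace_mul_psd_nonneg (psd_kron (hEpsd 0) (hFpsd 0)) hσpsd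
  have hA0nn : 0 ≤ A0 := trace_mul_psd_nonneg (psd_kron (hEpsd 0) hI) hσpsd
  have hB0nn : 0 ≤ B0 := trace_mul_psd_nonneg (psd_kron hI (hFpsd 0)) hσpsd
  have hsC : 0 ≤ (E 0).trace := psd_trace_nonneg (hEpsd 0)
  have htC : 0 ≤ (F 0).trace := psd_trace_nonneg (hFpsd 0)
  -- operator inequalities
  have h1subF : ((1 : Matrix (Fin d) (Fin d) ℂ) - F 0).PosSemidef :=
    psd_one_sub_povm hFpsd hFsum
  have h1subE : ((1 : Matrix (Fin d) (Fin d) ℂ) - E 0).PosSemidef :=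
    psd_one_sub_povm hEpsd hEsum
  have hQleA : Q00 ≤ A0 := by
    have h := trace_mul_psd_nonneg (psd_kron (hEpsd 0) h1subF) hσpsd
    rw [kron_sub, Matrix.sub_mul, Matrix.trace_sub] at h
    exact sub_nonneg.mp h
  have hQleB : Q00 ≤ B0 := by
    have h := trace_mul_psd_nonneg (psd_kron h1subE (hFpsd 0)) hσpsd
    rw [sub_kron, Matrix.sub_mul, Matrix.trace_sub] at h
    exact sub_nonneg.mp h
  have hAleS : A0 ≤ (E 0).trace := by
    have h := trace_mul_psd_nonneg (psd_kron (psd_le_trace_smul_one (hEpsd 0)) hI) hσpsd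
    rw [sub_kron, Matrix.smul_kronecker, Matrix.one_kronecker_one, Matrix.sub_mul,
      Matrix.smul_mul, Matrix.one_mul, Matrix.trace_sub, Matrix.trace_smul, hσtr,
      smul_eq_mul, mul_one] at h
    exact sub_nonneg.mp h
  have hBleT : B0 ≤ (F 0).trace := by
    have h := trace_mul_psd_nonneg (psd_kron hI (psd_le_trace_smul_one (hFpsd 0))) hσpsd
    rw [kron_sub, Matrix.kronecker_smul, Matrix.one_kronecker_one, Matrix.sub_mul,
      Matrix.smul_mul, Matrix.one_mul, Matrix.trace_sub, Matrix.trace_smul, hσtr,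
      smul_eq_mul, mul_one] at h
    exact sub_nonneg.mp h
  -- realness
  set sR := (E 0).trace.re with hsRdef
  set tR := (F 0).trace.re with htRdef
  set aR := A0.re with haRdef
  set bR := B0.re with hbRdef
  set qR := Q00.re with hqRdef
  have hsRe : (E 0).trace = (sR : ℂ) := by
    apply Complex.ext
    · rw [Complex.ofReal_re]
    · rw [Complex.ofReal_im]; exact ((Complex.le_def.mp hsC).2).symm
  have htRe : (F 0).trace = (tR : ℂ) := by
    apply Complex.ext
    · rw [Complex.ofReal_re]
    · rw [Complex.ofReal_im]; exact ((Complex.le_def.mp htC).2).symm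
  have haRe : A0 = (aR : ℂ) := by
    apply Complex.ext
    · rw [Complex.ofReal_re]
    · rw [Complex.ofReal_im]; exact ((Complex.le_def.mp hA0nn).2).symm
  have hbRe : B0 = (bR : ℂ) := by
    apply Complex.ext
    · rw [Complex.ofReal_re]
    · rw [Complex.ofReal_im]; exact ((Complex.le_def.mp hB0nn).2).symm
  have hqRe : Q00 = (qR : ℂ) := by
    apply Complex.ext
    · rw [Complex.ofReal_re]
    · rw [Complex.ofReal_im]; exact ((Complex.le_def.mp hQ0).2).symm
  have hsR0 : 0 ≤ sR := (Complex.le_def.mp hsC).1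
  have htR0 : 0 ≤ tR := (Complex.le_def.mp htC).1
  have hqR0 : 0 ≤ qR := by simpa using (Complex.le_def.mp hQ0).1
  have hQAre : qR ≤ aR := (Complex.le_def.mp hQleA).1
  have hQBre : qR ≤ bR := (Complex.le_def.mp hQleB).1
  have hASre : aR ≤ sR := by
    have := (Complex.le_def.mp hAleS).1
    rw [hsRe] at this
    simpa using this
  have hBTre : bR ≤ tR := by
    have := (Complex.le_def.mp hBleT).1
    rw [htRe] at this
    simpa using this
  -- POVM sums of noisy effects
  have hsumE : ∑ x, noisyEffect lam (E x) = 1 := by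
    unfold noisyEffect
    rw [Finset.sum_add_distrib, ← Finset.smul_sum, hEsum, ← Finset.sum_smul,
      ← Finset.sum_div, ← Finset.mul_sum, ← Matrix.trace_sum, hEsum, Matrix.trace_one]
    simp only [Fintype.card_fin]
    rw [mul_div_assoc, div_self hdC, mul_one, ← add_smul]
    norm_cast
    rw [sub_add_cancel, one_smul]
  have hsumF : ∑ y, noisyEffect lam (F y) = 1 := by
    unfold noisyEffect
    rw [Finset.sum_add_distrib, ← Finset.smul_sum, hFsum, ← Finset.sum_smul,
      ← Finset.sum_div, ← Finset.mul_sum, ← Matrix.trace_sum, hFsum, Matrix.trace_one]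
    simp only [Fintype.card_fin]
    rw [mul_div_assoc, div_self hdC, mul_one, ← add_smul]
    norm_cast
    rw [sub_add_cancel, one_smul]
  -- Amat row / column sums
  have hmR : (m:ℝ) ≠ 0 := by
    have : (1:ℝ) ≤ (m:ℝ) := by exact_mod_cast hm
    linarith
  have hA00 : Amat m k 0 0 = (1 - qval k) ^ 2 / 2 := by simp [Amat]
  have hrowR : ∑ y, Amat m k 0 y = (1 - qval k) / 2 := by
    rw [Fin.sum_univ_succ, hA00]
    have hy : ∀ y : Fin m, Amat m k 0 y.succ = qval k * (1 - qval k) / (2 * m) := by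
      intro y
      simp [Amat, Fin.succ_ne_zero]
    rw [Finset.sum_congr rfl (fun y _ => hy y), Finset.sum_const, Finset.card_univ,
      Fintype.card_fin, nsmul_eq_mul]
    field_simp
    ring
  have hcolR : ∑ x, Amat m k x 0 = (1 - qval k) / 2 := by
    rw [Fin.sum_univ_succ, hA00]
    have hx : ∀ x : Fin m, Amat m k x.succ 0 = qval k * (1 - qval k) / (2 * m) := by
      intro x
      simp [Amat, Fin.succ_ne_zero]
    rw [Finset.sum_congr rfl (fun x _ => hx x), Finset.sum_const, Finset.card_univ,
      Fintype.card_fin, nsmul_eq_mul]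
    field_simp
    ring
  -- row marginal equation
  have h1 : ∑ y, ((Amat m k 0 y : ℝ) : ℂ)
      = ((noisyEffect lam (E 0) ⊗ₖ (1 : Matrix (Fin d) (Fin d) ℂ)) * σ).trace := by
    rw [show ∑ y, ((Amat m k 0 y : ℝ) : ℂ)
        = ∑ y, ((noisyEffect lam (E 0) ⊗ₖ noisyEffect lam (F y)) * σ).trace from
      Finset.sum_congr rfl fun y _ => hP 0 y]
    rw [← Matrix.trace_sum, ← Finset.sum_mul, ← kron_sum_right, hsumF]
  have h1' : (((1 - qval k) / 2 : ℝ) : ℂ)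
      = ((noisyEffect lam (E 0) ⊗ₖ (1 : Matrix (Fin d) (Fin d) ℂ)) * σ).trace := by
    rw [← h1]
    norm_cast
    exact hrowR.symm
  have hexprow : ((noisyEffect lam (E 0) ⊗ₖ (1 : Matrix (Fin d) (Fin d) ℂ)) * σ).trace
      = ((1 - lam : ℝ) : ℂ) * A0 + ((lam : ℂ) * (E 0).trace / (d : ℂ)) := by
    simp only [noisyEffect, Matrix.add_kronecker, Matrix.smul_kronecker,
      Matrix.one_kronecker_one, Matrix.add_mul, Matrix.smul_mul, Matrix.one_mul,
      Matrix.trace_add, Matrix.trace_smul, smul_eq_mul, hσtr]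
    rw [hA0def]
    ring
  have e1C : (((1 - qval k) / 2 : ℝ) : ℂ)
      = ((1 - lam : ℝ) : ℂ) * (aR : ℂ) + ((lam : ℂ) * (sR : ℂ) / (d : ℂ)) := by
    rw [h1', hexprow, haRe, hsRe]
  have e1R : (1 - qval k) / 2 = (1 - lam) * aR + lam * sR / d := by
    exact_mod_cast e1C
  -- column marginal equation
  have h2 : ∑ x, ((Amat m k x 0 : ℝ) : ℂ)
      = (((1 : Matrix (Fin d) (Fin d) ℂ) ⊗ₖ noisyEffect lam (F 0)) * σ).trace := by
    rw [show ∑ x, ((Amat m k x 0 : ℝ) : ℂ)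
        = ∑ x, ((noisyEffect lam (E x) ⊗ₖ noisyEffect lam (F 0)) * σ).trace from
      Finset.sum_congr rfl fun x _ => hP x 0]
    rw [← Matrix.trace_sum, ← Finset.sum_mul, ← kron_sum_left, hsumE]
  have h2' : (((1 - qval k) / 2 : ℝ) : ℂ)
      = (((1 : Matrix (Fin d) (Fin d) ℂ) ⊗ₖ noisyEffect lam (F 0)) * σ).trace := by
    rw [← h2]
    norm_cast
    exact hcolR.symm
  have hexpcol : (((1 : Matrix (Fin d) (Fin d) ℂ) ⊗ₖ noisyEffect lam (F 0)) * σ).trace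
      = ((1 - lam : ℝ) : ℂ) * B0 + ((lam : ℂ) * (F 0).trace / (d : ℂ)) := by
    simp only [noisyEffect, Matrix.kronecker_add, Matrix.kronecker_smul,
      Matrix.one_kronecker_one, Matrix.add_mul, Matrix.smul_mul, Matrix.one_mul,
      Matrix.trace_add, Matrix.trace_smul, smul_eq_mul, hσtr]
    rw [hB0def]
    ring
  have e2C : (((1 - qval k) / 2 : ℝ) : ℂ)
      = ((1 - lam : ℝ) : ℂ) * (bR : ℂ) + ((lam : ℂ) * (tR : ℂ) / (d : ℂ)) := by
    rw [h2', hexpcol, hbRe, htRe]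
  have e2R : (1 - qval k) / 2 = (1 - lam) * bR + lam * tR / d := by
    exact_mod_cast e2C
  -- entry (0,0) equation
  have hexp00 : ((noisyEffect lam (E 0) ⊗ₖ noisyEffect lam (F 0)) * σ).trace
      = ((1 - lam : ℝ) : ℂ) ^ 2 * Q00
        + ((1 - lam : ℝ) : ℂ) * ((lam : ℂ) * (F 0).trace / (d : ℂ)) * A0
        + ((1 - lam : ℝ) : ℂ) * ((lam : ℂ) * (E 0).trace / (d : ℂ)) * B0
        + ((lam : ℂ) * (E 0).trace / (d : ℂ)) * ((lam : ℂ) * (F 0).trace / (d : ℂ)) := by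
    simp only [noisyEffect, Matrix.add_kronecker, Matrix.kronecker_add,
      Matrix.smul_kronecker, Matrix.kronecker_smul, Matrix.one_kronecker_one,
      Matrix.add_mul, Matrix.smul_mul, Matrix.one_mul, Matrix.trace_add,
      Matrix.trace_smul, smul_eq_mul, smul_smul, hσtr]
    rw [hA0def, hB0def, hQ00def]
    ring
  have e0C : (((1 - qval k) ^ 2 / 2 : ℝ) : ℂ)
      = ((1 - lam : ℝ) : ℂ) ^ 2 * (qR : ℂ)
        + ((1 - lam : ℝ) : ℂ) * ((lam : ℂ) * (tR : ℂ) / (d : ℂ)) * (aR : ℂ)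
        + ((1 - lam : ℝ) : ℂ) * ((lam : ℂ) * (sR : ℂ) / (d : ℂ)) * (bR : ℂ)
        + ((lam : ℂ) * (sR : ℂ) / (d : ℂ)) * ((lam : ℂ) * (tR : ℂ) / (d : ℂ)) := by
    have h00 := hP 0 0
    rw [hA00] at h00
    rw [← hqRe, ← haRe, ← hbRe, ← hsRe, ← htRe, ← hexp00]
    exact h00
  have e0R : (1 - qval k) ^ 2 / 2
      = (1 - lam) ^ 2 * qR + (1 - lam) * (lam * tR / d) * aR
        + (1 - lam) * (lam * sR / d) * bR + (lam * sR / d) * (lam * tR / d) := by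
    exact_mod_cast e0C
  -- assemble and finish
  set u := lam * sR / d with hu_def
  set v := lam * tR / d with hv_def
  have hu : 0 ≤ u := by
    rw [hu_def]
    exact div_nonneg (mul_nonneg hlam0.le hsR0) (by positivity)
  have hv : 0 ≤ v := by
    rw [hv_def]
    exact div_nonneg (mul_nonneg hlam0.le htR0) (by positivity)
  have hdu : (d : ℝ) * u = lam * sR := by
    rw [hu_def]
    field_simp
  have hdv : (d : ℝ) * v = lam * tR := by
    rw [hv_def]
    field_simp
  have hau : lam * aR ≤ (d : ℝ) * u := by
    rw [hdu]
    exact mul_le_mul_of_nonneg_left hASre hlam0.le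
  have hbv : lam * bR ≤ (d : ℝ) * v := by
    rw [hdv]
    exact mul_le_mul_of_nonneg_left hBTre hlam0.le
  have e1 : (1 - qval k) / 2 = (1 - (qval k - ε)) * aR + u := by
    rw [← hlam]; linarith [e1R]
  have e2 : (1 - qval k) / 2 = (1 - (qval k - ε)) * bR + v := by
    rw [← hlam]; linarith [e2R]
  have e0 : (1 - qval k) ^ 2 / 2
      = (1 - (qval k - ε)) ^ 2 * qR + (1 - (qval k - ε)) * (v * aR + u * bR) + u * v := by
    rw [← hlam]; linarith [e0R]
  have hau' : (qval k - ε) * aR ≤ (d : ℝ) * u := by rw [← hlam]; exact hau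
  have hbv' : (qval k - ε) * bR ≤ (d : ℝ) * v := by rw [← hlam]; exact hbv
  exact scalar_endgame (qval k) ε (d : ℝ) u v aR bR qR hq0 hq1 hε0 hεq hdR
    hu hv hqR0 e1 e2 e0 hQAre hQBre hau' hbv'

end
end
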